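/- Let F be a finite field of characteristic p and order q, and let d be an invertible exponent over F. For every a ∈ F, |W_{F,d}(a)| = q if and only if d is degenerate over F and a = 1; in all other cases |W_{F,d}(a)| < q. -/

import Mathlib

open scoped BigOperators

/-- The canonical additive character of a finite field `F` of characteristic `p`:
`ψ(x) = exp(2πi·Tr(x)/p)`, where `Tr` is the absolute trace from `F` to `𝔽_p = ZMod p`. -/
noncomputable def canonicalPsi (F : Type*) [Field F] [Fintype F] (p : ℕ) [CharP F p]
    (x : F) : ℂ :=
  letI : Algebra (ZMod p) F := ZMod.algebra F p
  Complex.exp (2 * Real.pi * Complex.I * ((Algebra.trace (ZMod p) F x).val : ℂ) / (p : ℂ))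

/-- The Weil sum `W_{F,d}(a) = ∑_{x ∈ F} ψ(x^d − a·x)`. -/
noncomputable def weilSum (F : Type*) [Field F] [Fintype F] (p : ℕ) [CharP F p]
    (d : ℕ) (a : F) : ℂ :=
  ∑ x : F, canonicalPsi F p (x ^ d - a * x)

namespace WeilAux

open Finset

set_option linter.unusedSectionVars false

attribute [local instance] ZMod.algebra

variable {F : Type*} [Field F] [Fintype F] {p : ℕ} [hp : Fact p.Prime] [CharP F p]


attribute [local instance] ZMod.algebra

variable {F : Type*} [Field F] [Fintype F] {p : ℕ} [hp : Fact p.Prime] [CharP F p]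

/-- Frobenius as an algebra equivalence over `ZMod p`. -/
noncomputable def frobAlg (F : Type*) [Field F] [Fintype F] (p : ℕ) [Fact p.Prime] [CharP F p] :
    F ≃ₐ[ZMod p] F :=
  AlgEquiv.ofBijective
    { toRingHom := frobenius F p
      commutes' := fun c => by
        show frobenius F p (algebraMap (ZMod p) F c) = algebraMap (ZMod p) F c
        rw [frobenius_def, ← map_pow, ZMod.pow_card] }
    (Finite.injective_iff_bijective.mp (frobenius_inj F p))

lemma frobAlg_apply (x : F) : frobAlg F p x = x ^ p := rfl

lemma frobAlg_pow_apply (k : ℕ) (x : F) : ((frobAlg F p) ^ k) x = x ^ p ^ k := by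
  induction k with
  | zero => simp
  | succ k ih =>
    rw [pow_succ', AlgEquiv.mul_apply, ih, frobAlg_apply, ← pow_mul, pow_succ,
      mul_comm (p ^ k) p]

lemma modeq_of_forall_units_pow_eq {e e' : ℕ} (h : ∀ u : Fˣ, (u : F) ^ e = (u : F) ^ e') :
    e ≡ e' [MOD Fintype.card F - 1] := by
  classical
  obtain ⟨g, hg⟩ := IsCyclic.exists_generator (α := Fˣ)
  have hord : orderOf g = Fintype.card F - 1 := by
    rw [orderOf_eq_card_of_forall_mem_zpowers hg, Nat.card_eq_fintype_card, Fintype.card_units]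
  rw [← hord, ← pow_eq_pow_iff_modEq]
  ext
  push_cast
  exact h g

lemma aux_inj {n i j : ℕ} (hq : Fintype.card F = p ^ n) (hi : i < n) (hj : j < n)
    (h : p ^ i ≡ p ^ j [MOD Fintype.card F - 1]) : i = j := by
  have hp2 : 2 ≤ p := hp.out.two_le
  -- reduce to the case i ≤ j
  have core : ∀ i j : ℕ, j < n → i ≤ j → p ^ i ≡ p ^ j [MOD Fintype.card F - 1] → i = j := by
    intro i j hj hij h
    rcases Nat.lt_or_ge n 2 with h1 | h2
    · omega
    · have hq4 : 4 ≤ Fintype.card F := by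
        rw [hq]
        calc (4:ℕ) = 2 ^ 2 := rfl
        _ ≤ p ^ 2 := Nat.pow_le_pow_left hp2 2
        _ ≤ p ^ n := Nat.pow_le_pow_right (by omega) h2
      set m := Fintype.card F - 1 with hm
      have hm3 : 3 ≤ m := by omega
      have hpm : Nat.Coprime p m := by
        refine (hp.out.coprime_iff_not_dvd).2 fun hdvd => ?_
        have h1' : p ∣ Fintype.card F := hq ▸ dvd_pow_self p (by omega : n ≠ 0)
        have h2' := Nat.dvd_sub h1' hdvd
        rw [Nat.sub_sub_self (by omega : 1 ≤ Fintype.card F)] at h2'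
        exact absurd (Nat.le_of_dvd one_pos h2') (by omega)
      have hco : Nat.Coprime (p ^ i) m := Nat.Coprime.pow_left i hpm
      have h' : p ^ i * 1 ≡ p ^ i * p ^ (j - i) [MOD m] := by
        rw [mul_one, ← pow_add, Nat.add_sub_cancel' hij]
        exact h
      have h1'' : 1 ≡ p ^ (j - i) [MOD m] := Nat.ModEq.cancel_left_of_coprime hco.symm h'
      have hle : p ^ (j - i) * p ≤ p ^ n := by
        rw [← pow_succ]
        exact Nat.pow_le_pow_right (by omega) (by omega)
      have hlt : p ^ (j - i) < m := by
        have hpos : 1 ≤ p ^ (j - i) := Nat.one_le_pow _ _ (by omega)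
        have h2t : p ^ (j - i) * 2 ≤ m + 1 := by
          calc p ^ (j - i) * 2 ≤ p ^ (j - i) * p := Nat.mul_le_mul_left _ hp2
          _ ≤ p ^ n := hle
          _ = m + 1 := by omega
        omega
      have e1 : p ^ (j - i) = 1 := by
        have := h1''
        unfold Nat.ModEq at this
        rw [Nat.mod_eq_of_lt (by omega), Nat.mod_eq_of_lt hlt] at this
        omega
      have : j - i = 0 := by
        by_contra hne
        have := Nat.le_self_pow hne p
        omega
      omega
  rcases le_total i j with hij | hij
  · exact core i j hj hij h
  · exact (core j i hi hij h.symm).symm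






lemma card_pow : Fintype.card F = p ^ Module.finrank (ZMod p) F :=
  Module.card_eq_pow_finrank (K := ZMod p) (V := F) |>.trans (by rw [ZMod.card])

lemma trace_eq_sum_frob (y : F) :
    algebraMap (ZMod p) F (Algebra.trace (ZMod p) F y) =
      ∑ i ∈ Finset.range (Module.finrank (ZMod p) F), y ^ p ^ i := by
  rw [trace_eq_sum_automorphisms]
  set n := Module.finrank (ZMod p) F with hn
  have hq : Fintype.card F = p ^ n := card_pow
  have hinj : Function.Injective (fun i : Fin n => (frobAlg F p) ^ (i : ℕ)) := by
    intro i j hij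
    have h' : ∀ u : Fˣ, (u : F) ^ p ^ (i : ℕ) = (u : F) ^ p ^ (j : ℕ) := by
      intro u
      have := congrArg (fun σ : F ≃ₐ[ZMod p] F => σ (u : F)) hij
      simpa [frobAlg_pow_apply] using this
    exact Fin.ext (aux_inj hq i.isLt j.isLt (modeq_of_forall_units_pow_eq h'))
  have hbij : Function.Bijective (fun i : Fin n => (frobAlg F p) ^ (i : ℕ)) :=
    (Fintype.bijective_iff_injective_and_card _).2
      ⟨hinj, by rw [Fintype.card_fin, ← Nat.card_eq_fintype_card, IsGalois.card_aut_eq_finrank]⟩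
  have hsum : ∑ i : Fin n, y ^ p ^ (i : ℕ) = ∑ σ : F ≃ₐ[ZMod p] F, σ y :=
    Fintype.sum_bijective _ hbij _ _ (fun i => (frobAlg_pow_apply _ _).symm)
  rw [← hsum]
  exact Fin.sum_univ_eq_sum_range (fun i => y ^ p ^ i) n

lemma trace_frob_pow (k : ℕ) (x : F) :
    Algebra.trace (ZMod p) F (x ^ p ^ k) = Algebra.trace (ZMod p) F x := by
  apply (algebraMap (ZMod p) F).injective
  rw [trace_eq_sum_automorphisms, trace_eq_sum_automorphisms]
  exact Fintype.sum_equiv (Equiv.mulRight ((frobAlg F p) ^ k))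
    (fun σ => σ (x ^ p ^ k)) (fun σ => σ x)
    (fun σ => by
      show σ (x ^ p ^ k) = (σ * (frobAlg F p) ^ k) x
      rw [AlgEquiv.mul_apply, frobAlg_pow_apply])

lemma pow_d_eq {d k : ℕ} (hd : 0 < d) (hdk : d ≡ p ^ k [MOD Fintype.card F - 1]) (x : F) :
    x ^ d = x ^ p ^ k := by
  rcases eq_or_ne x 0 with rfl | hx
  · rw [zero_pow hd.ne', zero_pow (pow_ne_zero k hp.out.pos.ne')]
  · set u : Fˣ := Units.mk0 x hx with hu
    have horder : orderOf u ∣ Fintype.card F - 1 := by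
      classical
      rw [← Fintype.card_units]
      exact orderOf_dvd_card
    have h2 : u ^ d = u ^ p ^ k := pow_eq_pow_iff_modEq.2 (hdk.of_dvd horder)
    have := congrArg Units.val h2
    simpa [hu] using this






/-- The power map `u ↦ u^e` as a monoid hom from units of `F` to `F`. -/
def powHom (F : Type*) [Field F] (e : ℕ) : Fˣ →* F :=
  (Units.coeHom F).comp (powMonoidHom e)

lemma powHom_apply (e : ℕ) (u : Fˣ) : powHom F e u = (u : F) ^ e := by
  simp [powHom, powMonoidHom]

lemma powHom_modeq {e e' : ℕ} (h : powHom F e = powHom F e') :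
    e ≡ e' [MOD Fintype.card F - 1] := by
  refine modeq_of_forall_units_pow_eq fun u => ?_
  have := DFunLike.congr_fun h u
  rwa [powHom_apply, powHom_apply] at this

lemma trace_zero_iff {d : ℕ} (hd : 0 < d) (hgcd : Nat.gcd d (Fintype.card F - 1) = 1) (a : F) :
    (∀ x : F, Algebra.trace (ZMod p) F (x ^ d - a * x) = 0) ↔
      ((∃ k : ℕ, d ≡ p ^ k [MOD Fintype.card F - 1]) ∧ a = 1) := by
  set n := Module.finrank (ZMod p) F with hn
  have hq : Fintype.card F = p ^ n := card_pow
  have hq2 : 2 ≤ Fintype.card F := Fintype.one_lt_card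
  have hn0 : 0 < n := by
    by_contra h
    simp only [not_lt, Nat.le_zero] at h
    rw [h, pow_zero] at hq
    omega
  have hpn1 : p ^ n ≡ 1 [MOD Fintype.card F - 1] := by
    have : p ^ n = (Fintype.card F - 1) + 1 := by omega
    rw [this]
    exact (Nat.add_mod_left _ _)
  constructor
  · intro H
    -- expand the trace as a sum of Frobenius powers
    have E : ∀ x : F, ∑ i ∈ Finset.range n, (x ^ (d * p ^ i) - a ^ p ^ i * x ^ p ^ i) = 0 := by
      intro x
      have h1 : algebraMap (ZMod p) F (Algebra.trace (ZMod p) F (x ^ d - a * x)) = 0 := by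
        rw [H x, map_zero]
      rw [trace_eq_sum_frob] at h1
      rw [← h1]
      refine Finset.sum_congr rfl fun i _ => ?_
      rw [sub_pow_char_pow, mul_pow, ← pow_mul]
    -- step 1 : d is congruent to a power of p
    have hk : ∃ k : ℕ, d ≡ p ^ k [MOD Fintype.card F - 1] := by
      by_contra hknone
      push_neg at hknone
      -- the family of monoid homs
      set v : (Fin n) ⊕ (Fin n) → (Fˣ →* F) := fun s =>
        Sum.elim (fun i : Fin n => powHom F (d * p ^ (i : ℕ)))
          (fun i : Fin n => powHom F (p ^ (i : ℕ))) s with hv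
      have hinj : Function.Injective v := by
        rintro (i | i) (j | j) hvij <;>
          simp only [hv, Sum.elim_inl, Sum.elim_inr] at hvij
        · have h1 := powHom_modeq hvij
          have h2 : p ^ (i : ℕ) ≡ p ^ (j : ℕ) [MOD Fintype.card F - 1] :=
            Nat.ModEq.cancel_left_of_coprime (Nat.Coprime.symm hgcd) h1
          exact congrArg Sum.inl (Fin.ext (aux_inj hq i.isLt j.isLt h2))
        · -- d * p^i ≡ p^j : contradiction with nondegeneracy
          exfalso
          have h1 := powHom_modeq hvij
          have h2 : d * p ^ (i : ℕ) * p ^ (n - (i : ℕ)) ≡ p ^ (j : ℕ) * p ^ (n - (i : ℕ))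
              [MOD Fintype.card F - 1] := h1.mul_right _
          rw [mul_assoc, ← pow_add, Nat.add_sub_cancel' i.isLt.le, ← pow_add] at h2
          have h3 : d ≡ d * p ^ n [MOD Fintype.card F - 1] := by
            conv_lhs => rw [← mul_one d]
            exact Nat.ModEq.mul_left d hpn1.symm
          exact hknone _ (h3.trans h2)
        · exfalso
          have h1 := (powHom_modeq hvij).symm
          have h2 : d * p ^ (j : ℕ) * p ^ (n - (j : ℕ)) ≡ p ^ (i : ℕ) * p ^ (n - (j : ℕ))
              [MOD Fintype.card F - 1] := h1.mul_right _
          rw [mul_assoc, ← pow_add, Nat.add_sub_cancel' j.isLt.le, ← pow_add] at h2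
          have h3 : d ≡ d * p ^ n [MOD Fintype.card F - 1] := by
            conv_lhs => rw [← mul_one d]
            exact Nat.ModEq.mul_left d hpn1.symm
          exact hknone _ (h3.trans h2)
        · have h1 := powHom_modeq hvij
          exact congrArg Sum.inr (Fin.ext (aux_inj hq i.isLt j.isLt h1))
      have li : LinearIndependent F ((fun f : Fˣ →* F => (f : Fˣ → F)) ∘ v) :=
        (linearIndependent_monoidHom Fˣ F).comp v hinj
      set c : (Fin n) ⊕ (Fin n) → F := Sum.elim (fun _ => (1 : F)) (fun i => -(a ^ p ^ (i : ℕ)))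
        with hc
      have hsum : ∑ s, c s • ((fun f : Fˣ →* F => (f : Fˣ → F)) ∘ v) s = 0 := by
        funext u
        simp only [Finset.sum_apply, Pi.smul_apply, Function.comp_apply, smul_eq_mul,
          Pi.zero_apply]
        rw [Fintype.sum_sum_type]
        simp only [hc, hv, Sum.elim_inl, Sum.elim_inr, one_mul, powHom_apply, neg_mul]
        rw [← Finset.sum_add_distrib]
        have := E (u : F)
        rw [← Fin.sum_univ_eq_sum_range
          (fun i => ((u : F) ^ (d * p ^ i) - a ^ p ^ i * (u : F) ^ p ^ i)) n] at this
        rw [← this]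
        exact Finset.sum_congr rfl fun i _ => by ring
      have := Fintype.linearIndependent_iff.mp li c hsum (Sum.inl ⟨0, hn0⟩)
      simp [hc] at this
    obtain ⟨k, hdk⟩ := hk
    refine ⟨⟨k, hdk⟩, ?_⟩
    -- step 2 : a = 1
    have H2 : ∀ x : F, Algebra.trace (ZMod p) F ((1 - a) * x) = 0 := by
      intro x
      have h1 := H x
      rw [pow_d_eq hd hdk] at h1
      have h2 : (x : F) ^ p ^ k - a * x = (x ^ p ^ k - x) + (1 - a) * x := by ring
      rw [h2, map_add, map_sub, trace_frob_pow, sub_self, zero_add] at h1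
      exact h1
    by_contra hne
    have hne' : (1 : F) - a ≠ 0 := fun h => hne (by linear_combination -h)
    have htr := (traceForm_nondegenerate (ZMod p) F).1 (1 - a)
    simp_rw [Algebra.traceForm_apply] at htr
    exact hne' (htr fun x => H2 x)
  · rintro ⟨⟨k, hdk⟩, rfl⟩
    intro x
    rw [pow_d_eq hd hdk, one_mul, map_sub, trace_frob_pow, sub_self]





lemma psi_abs (y : F) : ‖canonicalPsi F p y‖ = 1 := by
  unfold canonicalPsi
  rw [show (2 * (Real.pi : ℂ) * Complex.I * (((Algebra.trace (ZMod p) F y).val : ℕ) : ℂ) / (p : ℂ))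
      = (((2 * Real.pi * ((Algebra.trace (ZMod p) F y).val : ℕ) / p : ℝ)) : ℂ) * Complex.I by
    push_cast
    ring]
  exact Complex.norm_exp_ofReal_mul_I _

lemma psi_eq_one_iff (y : F) :
    canonicalPsi F p y = 1 ↔ Algebra.trace (ZMod p) F y = 0 := by
  unfold canonicalPsi
  set v : ℕ := (Algebra.trace (ZMod p) F y).val with hv
  have hp0 : (p : ℂ) ≠ 0 := Nat.cast_ne_zero.mpr hp.out.pos.ne'
  have hvlt : v < p := ZMod.val_lt _
  have h2πI : (2 * (Real.pi : ℂ) * Complex.I) ≠ 0 := by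
    simp [Real.pi_ne_zero, Complex.I_ne_zero]
  constructor
  · intro h
    obtain ⟨m, hm⟩ := Complex.exp_eq_one_iff.mp h
    rw [div_eq_iff hp0] at hm
    have h2 : (2 * (Real.pi : ℂ) * Complex.I) * (v : ℂ)
        = (2 * (Real.pi : ℂ) * Complex.I) * ((m : ℂ) * (p : ℂ)) := by linear_combination hm
    have hv' := mul_left_cancel₀ h2πI h2
    have hz : (v : ℤ) = m * (p : ℤ) := by exact_mod_cast hv'
    have hp1 : (1 : ℤ) ≤ (p : ℤ) := by exact_mod_cast hp.out.pos
    have hm0 : m = 0 := by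
      rcases lt_trichotomy m 0 with hc | hc | hc
      · exfalso
        have : m * (p : ℤ) ≤ -1 * (p : ℤ) :=
          mul_le_mul_of_nonneg_right (by omega) (by positivity)
        have hv0 : (0 : ℤ) ≤ (v : ℤ) := Int.natCast_nonneg v
        linarith
      · exact hc
      · exfalso
        have : 1 * (p : ℤ) ≤ m * (p : ℤ) :=
          mul_le_mul_of_nonneg_right (by omega) (by positivity)
        have hvp : (v : ℤ) < (p : ℤ) := by exact_mod_cast hvlt
        linarith
    have hv0 : v = 0 := by rw [hm0] at hz; simpa using hz
    exact (ZMod.val_eq_zero _).mp hv0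
  · intro h
    have hv0 : v = 0 := by rw [hv, h]; simp
    rw [hv0]
    simp

lemma abs_sum_le_card (f : F → ℂ) (h1 : ∀ x, ‖f x‖ = 1) :
    ‖∑ x : F, f x‖ ≤ (Fintype.card F : ℝ) := by
  calc ‖∑ x : F, f x‖ ≤ ∑ x : F, ‖f x‖ := norm_sum_le _ _
  _ = (Fintype.card F : ℝ) := by simp [h1]

lemma abs_sum_lt_card (f : F → ℂ) (h1 : ∀ x, ‖f x‖ = 1)
    (h0 : f 0 = 1) {x₀ : F} (hx : f x₀ ≠ 1) :
    ‖∑ x : F, f x‖ < (Fintype.card F : ℝ) := by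
  classical
  have hx0 : x₀ ≠ 0 := by rintro rfl; exact hx h0
  have hmem0 : (0 : F) ∈ Finset.univ := Finset.mem_univ _
  have hx0mem : x₀ ∈ Finset.univ.erase (0 : F) := Finset.mem_erase.2 ⟨hx0, Finset.mem_univ _⟩
  set s := (Finset.univ.erase (0 : F)).erase x₀ with hs
  have hq2 : 2 ≤ Fintype.card F := Fintype.one_lt_card
  have hsum : ∑ x : F, f x = (f x₀ + 1) + ∑ x ∈ s, f x := by
    rw [← Finset.add_sum_erase _ f hmem0, ← Finset.add_sum_erase _ f hx0mem, h0, hs]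
    ring
  have hb : ‖f x₀ + 1‖ < 2 := by
    have hray : ¬ SameRay ℝ (f x₀) (1 : ℂ) := by
      intro h
      exact hx (h.eq_of_norm_eq (by simp [h1 x₀]))
    have := norm_add_lt_of_not_sameRay hray
    rw [h1 x₀] at this
    norm_num at this
    linarith
  have hcard : (s.card : ℝ) = (Fintype.card F : ℝ) - 2 := by
    rw [hs, Finset.card_erase_of_mem hx0mem, Finset.card_erase_of_mem hmem0, Finset.card_univ]
    have h1' : Fintype.card F - 1 - 1 = Fintype.card F - 2 := by omega
    rw [h1', Nat.cast_sub hq2]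
    norm_num
  calc ‖∑ x : F, f x‖ = ‖(f x₀ + 1) + ∑ x ∈ s, f x‖ := by rw [hsum]
  _ ≤ ‖f x₀ + 1‖ + ‖∑ x ∈ s, f x‖ := norm_add_le _ _
  _ ≤ ‖f x₀ + 1‖ + ∑ x ∈ s, ‖f x‖ := by
      have := norm_sum_le s f
      linarith
  _ = ‖f x₀ + 1‖ + s.card := by
      rw [Finset.sum_congr rfl fun x _ => h1 x, Finset.sum_const, nsmul_eq_mul, mul_one]
  _ < 2 + ((Fintype.card F : ℝ) - 2) := by rw [hcard]; linarith
  _ = (Fintype.card F : ℝ) := by ring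

end WeilAux

/-- `|W_{F,d}(a)| = q` iff `d` is degenerate over `F` and `a = 1`; otherwise `|W_{F,d}(a)| < q`. -/
theorem abs_weilSum_eq_card_iff (F : Type*) [Field F] [Fintype F]
    (p : ℕ) [Fact p.Prime] [CharP F p] (d : ℕ) (hd : 0 < d)
    (hgcd : Nat.gcd d (Fintype.card F - 1) = 1) :
    ∀ a : F,
      (‖weilSum F p d a‖ = (Fintype.card F : ℝ) ↔
        ((∃ k : ℕ, d ≡ p ^ k [MOD Fintype.card F - 1]) ∧ a = 1)) ∧
      (¬ ((∃ k : ℕ, d ≡ p ^ k [MOD Fintype.card F - 1]) ∧ a = 1) →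
        ‖weilSum F p d a‖ < (Fintype.card F : ℝ)) := by
  intro a
  letI : Algebra (ZMod p) F := ZMod.algebra F p
  have key : (∀ x : F, canonicalPsi F p (x ^ d - a * x) = 1) ↔
      ((∃ k : ℕ, d ≡ p ^ k [MOD Fintype.card F - 1]) ∧ a = 1) := by
    rw [← WeilAux.trace_zero_iff hd hgcd a]
    exact forall_congr' fun x => WeilAux.psi_eq_one_iff _
  have habs : ∀ x : F, ‖canonicalPsi F p (x ^ d - a * x)‖ = 1 :=
    fun x => WeilAux.psi_abs _
  have hf0 : canonicalPsi F p ((0 : F) ^ d - a * 0) = 1 := by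
    rw [WeilAux.psi_eq_one_iff, zero_pow hd.ne', mul_zero, sub_zero, map_zero]
  have hlt : ¬ ((∃ k : ℕ, d ≡ p ^ k [MOD Fintype.card F - 1]) ∧ a = 1) →
      ‖weilSum F p d a‖ < (Fintype.card F : ℝ) := by
    intro hR
    have hnall : ¬ ∀ x : F, canonicalPsi F p (x ^ d - a * x) = 1 := fun hall => hR (key.mp hall)
    push_neg at hnall
    obtain ⟨x₀, hx₀⟩ := hnall
    exact WeilAux.abs_sum_lt_card (fun x => canonicalPsi F p (x ^ d - a * x)) habs hf0 hx₀
  refine ⟨⟨fun h => by_contra fun hR => (hlt hR).ne h, fun hR => ?_⟩, hlt⟩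
  have hall := key.mpr hR
  have : weilSum F p d a = (Fintype.card F : ℂ) := by
    rw [show weilSum F p d a = ∑ x : F, canonicalPsi F p (x ^ d - a * x) from rfl,
      Finset.sum_congr rfl fun x _ => hall x, Finset.sum_const, Finset.card_univ, nsmul_eq_mul,
      mul_one]
  rw [this, Complex.norm_natCast]
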